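/- Dung's grounded argumentation semantics J_{a/u} satisfies J_{a/u} = J_{a/su} = J_{a/a} = J_{a/d} = J_{a/sa}, and J_{a/u} ⊆ J_{x/y} for all notions of attack x ∈ {u, a, d, su, sa} and all defence relations y among these. -/
import Mathlib


/-- The set of `x/y`-acceptable arguments with respect to `S`. -/
def Facc {Arg : Type*} (x y : Arg → Arg → Prop) (S : Set Arg) : Set Arg :=
  {A | ∀ B, x B A → ∃ C ∈ S, y C B}

theorem Facc_mono {Arg : Type*} (x y : Arg → Arg → Prop) : Monotone (Facc x y) := by
  intro S T hST A hA B hB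
  obtain ⟨C, hC, hCB⟩ := hA B hB
  exact ⟨C, hST hC, hCB⟩

/-- `Facc` as an order homomorphism. -/
def Fhom {Arg : Type*} (x y : Arg → Arg → Prop) : Set Arg →o Set Arg :=
  ⟨Facc x y, Facc_mono x y⟩

/-- The least-fixpoint argumentation semantics: the set of `x/y`-justified arguments. -/
def Jlfp {Arg : Type*} (x y : Arg → Arg → Prop) : Set Arg :=
  OrderHom.lfp (Fhom x y)

theorem Jlfp_fix {Arg : Type*} (x y : Arg → Arg → Prop) :
    Facc x y (Jlfp x y) = Jlfp x y :=
  OrderHom.map_lfp (Fhom x y)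

theorem Jlfp_mono {Arg : Type*} {x x' y y' : Arg → Arg → Prop}
    (hx : ∀ A B, x' A B → x A B) (hy : ∀ A B, y A B → y' A B) :
    Jlfp x y ⊆ Jlfp x' y' := by
  have h : Facc x y (Jlfp x' y') ⊆ Jlfp x' y' := by
    intro A hA
    rw [← Jlfp_fix x' y']
    intro B hB
    obtain ⟨C, hC, hCB⟩ := hA B (hx _ _ hB)
    exact ⟨C, hC, hy _ _ hCB⟩
  exact OrderHom.lfp_le (Fhom x y) h

/-- Dung's grounded semantics `J_{a/u}` is invariant under the choice of defence
and is the most sceptical of all the notions of justifiability. -/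
theorem dung_semantics_least {Arg : Type*} (u r a d sa su : Arg → Arg → Prop)
    (hr : ∀ A B, r A B → r B A)
    (ha : ∀ A B, a A B ↔ u A B ∨ r A B)
    (hd : ∀ A B, d A B ↔ u A B ∨ (r A B ∧ ¬ u B A))
    (hsa : ∀ A B, sa A B ↔ a A B ∧ ¬ u B A)
    (hsu : ∀ A B, su A B ↔ u A B ∧ ¬ u B A) :
    (Jlfp a u = Jlfp a su ∧ Jlfp a u = Jlfp a a ∧ Jlfp a u = Jlfp a d ∧
      Jlfp a u = Jlfp a sa) ∧
    (∀ x y : Arg → Arg → Prop,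
      (x = u ∨ x = a ∨ x = d ∨ x = su ∨ x = sa) →
      (y = u ∨ y = a ∨ y = d ∨ y = su ∨ y = sa) →
      Jlfp a u ⊆ Jlfp x y) := by
  -- basic inclusions between notions of attack
  have hsu_u : ∀ A B, su A B → u A B := fun A B h => ((hsu A B).mp h).1
  have hu_a : ∀ A B, u A B → a A B := fun A B h => (ha A B).mpr (Or.inl h)
  have hu_d : ∀ A B, u A B → d A B := fun A B h => (hd A B).mpr (Or.inl h)
  have hd_a : ∀ A B, d A B → a A B := by
    intro A B h
    rcases (hd A B).mp h with h' | ⟨h', _⟩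
    · exact (ha A B).mpr (Or.inl h')
    · exact (ha A B).mpr (Or.inr h')
  have hsu_sa : ∀ A B, su A B → sa A B := by
    intro A B h
    obtain ⟨h1, h2⟩ := (hsu A B).mp h
    exact (hsa A B).mpr ⟨(ha A B).mpr (Or.inl h1), h2⟩
  have hsa_d : ∀ A B, sa A B → d A B := by
    intro A B h
    obtain ⟨h1, h2⟩ := (hsa A B).mp h
    rcases (ha A B).mp h1 with h' | h'
    · exact (hd A B).mpr (Or.inl h')
    · exact (hd A B).mpr (Or.inr ⟨h', h2⟩)
  have hsa_a : ∀ A B, sa A B → a A B := fun A B h => hd_a A B (hsa_d A B h)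
  have hsu_d : ∀ A B, su A B → d A B := fun A B h => hu_d A B (hsu_u A B h)
  have hsu_a : ∀ A B, su A B → a A B := fun A B h => hu_a A B (hsu_u A B h)
  have hid : ∀ A B, a A B → a A B := fun _ _ h => h
  -- the crux: every `a`-defender in `Jlfp a su` can be upgraded to an `su`-defender
  have L : ∀ C ∈ Jlfp a su, ∀ B, a C B → ∃ C' ∈ Jlfp a su, su C' B := by
    intro C hC B hCB
    have hCfix : C ∈ Facc a su (Jlfp a su) := by rw [Jlfp_fix]; exact hC
    by_cases hBC : u B C
    · exact hCfix B ((ha B C).mpr (Or.inl hBC))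
    · rcases (ha C B).mp hCB with h' | h'
      · exact ⟨C, hC, (hsu C B).mpr ⟨h', hBC⟩⟩
      · exact hCfix B ((ha B C).mpr (Or.inr (hr C B h')))
  have crux : Jlfp a a ⊆ Jlfp a su := by
    apply OrderHom.lfp_le (Fhom a a)
    intro A hA
    rw [← Jlfp_fix a su]
    intro B hB
    obtain ⟨C, hC, hCB⟩ := hA B hB
    exact L C hC B hCB
  -- all `Jlfp a y` with `su ⊆ y ⊆ a` coincide
  have h_ua : Jlfp a u ⊆ Jlfp a a := Jlfp_mono hid hu_a
  have h_su_u : Jlfp a su ⊆ Jlfp a u := Jlfp_mono hid hsu_u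
  have e1 : Jlfp a u = Jlfp a su :=
    Set.Subset.antisymm (h_ua.trans crux) h_su_u
  have e2 : Jlfp a u = Jlfp a a :=
    Set.Subset.antisymm h_ua (crux.trans h_su_u)
  have e3 : Jlfp a u = Jlfp a d :=
    Set.Subset.antisymm ((h_ua.trans crux).trans (Jlfp_mono hid hsu_d))
      ((Jlfp_mono hid hd_a).trans (crux.trans h_su_u))
  have e4 : Jlfp a u = Jlfp a sa :=
    Set.Subset.antisymm ((h_ua.trans crux).trans (Jlfp_mono hid hsu_sa))
      ((Jlfp_mono hid (fun A B h => hd_a A B (hsa_d A B h))).trans (crux.trans h_su_u))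
  refine ⟨⟨e1, e2, e3, e4⟩, ?_⟩
  intro x y hx hy
  have hxa : ∀ A B, x A B → a A B := by
    rcases hx with rfl | rfl | rfl | rfl | rfl
    · exact hu_a
    · exact hid
    · exact hd_a
    · exact hsu_a
    · exact hsa_a
  have hsuy : ∀ A B, su A B → y A B := by
    rcases hy with rfl | rfl | rfl | rfl | rfl
    · exact hsu_u
    · exact hsu_a
    · exact hsu_d
    · exact fun _ _ h => h
    · exact hsu_sa
  calc Jlfp a u ⊆ Jlfp a su := e1.subset
    _ ⊆ Jlfp x y := Jlfp_mono hxa hsuy
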